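/- Let E be a real inner product space with inner product ⟨·,·⟩_H, let y_1, …, y_M ∈ E be a finite family of snapshots, and let φ_1, …, φ_d ∈ E be POD modes for this family: the φ_i are orthonormal with respect to ⟨·,·⟩_H, every snapshot y_n lies in span{φ_1, …, φ_d}, and there exist nonnegative reals λ_1, …, λ_d such that (1/M) Σ_{n=1}^M ⟨y_n, φ_i⟩_H ⟨y_n, φ_j⟩_H = λ_i δ_{ij} for all 1 ≤ i, j ≤ d. Let ⟨·,·⟩_W be a second inner product on E with associated norm ‖·‖_W, fix 0 ≤ r ≤ d, and let R_r : E → E be any linear projection onto X^r = span{φ_1, …, φ_r} (i.e., R_r is linear, its range is contained in X^r, and R_r v = v for all v ∈ X^r). Then (1/M) Σ_{n=1}^M ‖y_n − R_r y_n‖_W² = Σ_{i=r+1}^d λ_i ‖φ_i − R_r φ_i‖_W². -/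

import Mathlib

open scoped InnerProductSpace

/-- Identity (2.1b) of Lemma 2.1: the mean-square error of an arbitrary linear
projection `R` onto the span of the first `r` POD modes, measured in a second
inner product `W`, equals the tail sum of POD eigenvalues weighted by
`‖φ i − R (φ i)‖_W²`. -/
theorem pod_projection_error_W_norm_general_projection
    {E : Type*} [NormedAddCommGroup E] [InnerProductSpace ℝ E]
    (M d : ℕ) (hM : 0 < M)
    (y : Fin M → E) (φ : Fin d → E) (lam : Fin d → ℝ)
    (hortho : Orthonormal ℝ φ)
    (hspan : ∀ n, y n ∈ Submodule.span ℝ (Set.range φ))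
    (hlam_nonneg : ∀ i, 0 ≤ lam i)
    (hcorr : ∀ i j : Fin d,
      (1 / (M : ℝ)) * ∑ n, ⟪y n, φ i⟫_ℝ * ⟪y n, φ j⟫_ℝ
        = if i = j then lam i else 0)
    (innerW : E → E → ℝ)
    (hW_symm : ∀ u v, innerW u v = innerW v u)
    (hW_add : ∀ u v w, innerW (u + v) w = innerW u w + innerW v w)
    (hW_smul : ∀ (c : ℝ) (u v : E), innerW (c • u) v = c * innerW u v)
    (hW_pos : ∀ u : E, u ≠ 0 → 0 < innerW u u)
    (r : ℕ) (hr : r ≤ d)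
    (R : E →ₗ[ℝ] E)
    (hR_range : ∀ v, R v ∈ Submodule.span ℝ (φ '' {i : Fin d | (i : ℕ) < r}))
    (hR_proj : ∀ v ∈ Submodule.span ℝ (φ '' {i : Fin d | (i : ℕ) < r}), R v = v) :
    (1 / (M : ℝ)) * ∑ n, innerW (y n - R (y n)) (y n - R (y n))
      = ∑ i ∈ Finset.univ.filter (fun i : Fin d => r ≤ (i : ℕ)),
          lam i * innerW (φ i - R (φ i)) (φ i - R (φ i)) := by
  classical
  set S : Finset (Fin d) := Finset.univ.filter (fun i : Fin d => r ≤ (i : ℕ)) with hS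
  set ψ : Fin d → E := fun i => φ i - R (φ i) with hψ
  -- basic bilinearity facts
  have hz : ∀ v, innerW 0 v = 0 := by
    intro v
    have := hW_smul 0 0 v
    simpa using this
  have hsum_left : ∀ (s : Finset (Fin d)) (f : Fin d → E) (v : E),
      innerW (∑ i ∈ s, f i) v = ∑ i ∈ s, innerW (f i) v := by
    intro s f v
    induction s using Finset.induction_on with
    | empty => simpa using hz v
    | insert _ _ h ih => rw [Finset.sum_insert h, hW_add, ih, Finset.sum_insert h]
  have hsum_right : ∀ (s : Finset (Fin d)) (f : Fin d → E) (v : E),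
      innerW v (∑ i ∈ s, f i) = ∑ i ∈ s, innerW v (f i) := by
    intro s f v
    rw [hW_symm, hsum_left]
    exact Finset.sum_congr rfl fun i _ => hW_symm _ _
  -- expansion of y n in the modes
  have hy : ∀ n, y n = ∑ i, ⟪y n, φ i⟫_ℝ • φ i := by
    intro n
    obtain ⟨a, ha⟩ := (Submodule.mem_span_range_iff_exists_fun ℝ).mp (hspan n)
    have hcoef : ∀ i, ⟪y n, φ i⟫_ℝ = a i := by
      intro i
      rw [← ha, sum_inner]
      have : ∀ j, ⟪a j • φ j, φ i⟫_ℝ = a j * (if j = i then 1 else 0) := by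
        intro j
        rw [real_inner_smul_left, orthonormal_iff_ite.mp hortho]
      simp [this]
    calc y n = ∑ i, a i • φ i := ha.symm
      _ = ∑ i, ⟪y n, φ i⟫_ℝ • φ i := Finset.sum_congr rfl fun i _ => by rw [hcoef i]
  -- ψ vanishes for i < r
  have hψ0 : ∀ i : Fin d, (i : ℕ) < r → ψ i = 0 := by
    intro i hi
    have : R (φ i) = φ i := hR_proj _ (Submodule.subset_span ⟨i, hi, rfl⟩)
    simp [hψ, this]
  -- difference expansion
  have hdiff : ∀ n, y n - R (y n) = ∑ i ∈ S, ⟪y n, φ i⟫_ℝ • ψ i := by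
    intro n
    have hRy : R (y n) = ∑ i, ⟪y n, φ i⟫_ℝ • R (φ i) := by
      conv_lhs => rw [hy n]
      simp [map_sum, map_smul]
    have h1 : y n - R (y n) = ∑ i, ⟪y n, φ i⟫_ℝ • ψ i := by
      rw [hRy]
      nth_rewrite 1 [hy n]
      rw [← Finset.sum_sub_distrib]
      exact Finset.sum_congr rfl fun i _ => by rw [hψ, ← smul_sub]
    rw [h1]
    refine (Finset.sum_subset (Finset.filter_subset _ _) ?_).symm
    intro i _ hi
    have : (i : ℕ) < r := by
      simpa [hS, not_le] using hi
    rw [hψ0 i this, smul_zero]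
  -- expand each term bilinearly
  have key : ∀ n, innerW (y n - R (y n)) (y n - R (y n))
      = ∑ i ∈ S, ∑ j ∈ S, (⟪y n, φ i⟫_ℝ * ⟪y n, φ j⟫_ℝ) * innerW (ψ i) (ψ j) := by
    intro n
    rw [hdiff n, hsum_left]
    refine Finset.sum_congr rfl fun i _ => ?_
    rw [hsum_right]
    refine Finset.sum_congr rfl fun j _ => ?_
    rw [hW_smul]
    rw [hW_symm, hW_smul, hW_symm (ψ j) (ψ i)]
    ring
  calc (1 / (M : ℝ)) * ∑ n, innerW (y n - R (y n)) (y n - R (y n))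
      = ∑ i ∈ S, ∑ j ∈ S,
          ((1 / (M : ℝ)) * ∑ n, ⟪y n, φ i⟫_ℝ * ⟪y n, φ j⟫_ℝ) * innerW (ψ i) (ψ j) := by
        simp_rw [key]
        rw [Finset.sum_comm]
        rw [Finset.mul_sum]
        refine Finset.sum_congr rfl fun i _ => ?_
        rw [Finset.sum_comm, Finset.mul_sum]
        refine Finset.sum_congr rfl fun j _ => ?_
        rw [← Finset.sum_mul, mul_assoc]
    _ = ∑ i ∈ S, lam i * innerW (ψ i) (ψ i) := by
        refine Finset.sum_congr rfl fun i hi => ?_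
        simp_rw [hcorr]
        simp_rw [ite_mul, zero_mul]
        rw [Finset.sum_ite_eq S i (fun j => lam i * innerW (ψ i) (ψ j)), if_pos hi]
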